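/- Let K be a totally real number field of degree 2 over ℚ with ring of integers 𝓞, let σ be the nontrivial element of Gal(K/ℚ), let 𝔡 be the different ideal of 𝓞 over ℤ, and assume 𝔡 = δ𝓞 for some δ ∈ 𝓞. Let p be a rational prime such that p𝓞 is a prime ideal. Let ψ be a function from the nonzero ideals of 𝓞 to ℂ such that ψ(IJ) = ψ(I)ψ(J) for all nonzero ideals I, J, ψ(I)·ψ(σ(I)) = 1 for every nonzero ideal I, ψ(x𝓞) = 1 for every totally positive x ∈ 𝓞, and ψ(𝔡) = −1. Then for every integer n ≥ 1, the set S_n := {ν ∈ K : ν totally positive, νδ ∈ 𝓞, Tr_{K/ℚ}(ν) = n} is finite, and Σ_{ν ∈ S_n} Σ_{I ∣ (νδ)𝓞, p𝓞 ∤ I} ψ(I) = 0, where the inner sum runs over the nonzero ideals I of 𝓞 dividing (νδ)𝓞 that are not divisible by p𝓞. (This is the vanishing of the n-th Fourier coefficient of the diagonal restriction of the p-stabilised Hilbert Eisenstein series E₁^{(p)}(1, ψ), Lemma 4.3 of the paper.) -/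

import Mathlib

open NumberField
open scoped nonZeroDivisors

section Aux
variable {K : Type*} [Field K] [NumberField K]

/-- A complex embedding with real values yields a real embedding. -/
def stmt11RealEmb (φ : K →+* ℂ) (h : ∀ x : K, (φ x).im = 0) : K →+* ℝ where
  toFun x := (φ x).re
  map_one' := by simp
  map_mul' x y := by simp [Complex.mul_re, h]
  map_zero' := by simp
  map_add' x y := by simp

lemma stmt11RealEmb_apply (φ : K →+* ℂ) (h : ∀ x : K, (φ x).im = 0) (x : K) :
    stmt11RealEmb φ h x = (φ x).re := rfl

lemma stmt11_dual_mem (δ : 𝓞 K) (hδ : differentIdeal ℤ (𝓞 K) = Ideal.span {δ})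
    (hδ0 : (δ : K) ≠ 0) (x : K) :
    (∃ m : 𝓞 K, (m : K) = x * (δ : K)) ↔
      ∀ w : 𝓞 K, ∃ r : ℤ, (r : ℚ) = Algebra.trace ℚ K (x * (w : K)) := by
  have h1 := coeIdeal_differentIdeal ℤ ℚ K (𝓞 K)
  rw [hδ, FractionalIdeal.coeIdeal_span_singleton] at h1
  have h2 : FractionalIdeal.dual ℤ ℚ (1 : FractionalIdeal (𝓞 K)⁰ K)
      = FractionalIdeal.spanSingleton (𝓞 K)⁰ ((δ : K)⁻¹) := by
    have := congrArg (fun I : FractionalIdeal (𝓞 K)⁰ K => I⁻¹) h1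
    simp only [inv_inv] at this
    rw [← this, FractionalIdeal.spanSingleton_inv]
  have h3 : ∀ y : K, y ∈ FractionalIdeal.dual ℤ ℚ (1 : FractionalIdeal (𝓞 K)⁰ K) ↔
      (∃ m : 𝓞 K, (m : K) = y * (δ : K)) := by
    intro y
    rw [h2, FractionalIdeal.mem_spanSingleton]
    constructor
    · rintro ⟨z, hz⟩
      refine ⟨z, ?_⟩
      have hz' : (z : K) * (δ : K)⁻¹ = y := by
        rw [← hz, Algebra.smul_def, RingOfIntegers.coe_eq_algebraMap]
      field_simp at hz'
      rw [hz', mul_comm]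
    · rintro ⟨m, hm⟩
      refine ⟨m, ?_⟩
      show (m : 𝓞 K) • (δ : K)⁻¹ = y
      rw [Algebra.smul_def, ← RingOfIntegers.coe_eq_algebraMap, hm]
      field_simp
  have h10 : (1 : FractionalIdeal (𝓞 K)⁰ K) ≠ 0 := by
    intro h
    have h11 := FractionalIdeal.one_mem_one (𝓞 K)⁰ (P := K)
    rw [h, FractionalIdeal.mem_zero_iff] at h11
    exact one_ne_zero h11
  constructor
  · intro hx w
    have hmem := (h3 x).mpr hx
    rw [FractionalIdeal.mem_dual h10] at hmem
    have := hmem (w : K) (FractionalIdeal.coe_mem_one _ w)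
    rw [Algebra.traceForm_apply] at this
    obtain ⟨r, hr⟩ := this
    exact ⟨r, by simpa using hr⟩
  · intro hx
    refine (h3 x).mp ?_
    rw [FractionalIdeal.mem_dual h10]
    intro a ha
    rw [FractionalIdeal.mem_one_iff] at ha
    obtain ⟨w, rfl⟩ := ha
    rw [Algebra.traceForm_apply]
    obtain ⟨r, hr⟩ := hx w
    rw [RingOfIntegers.coe_eq_algebraMap] at hr
    exact ⟨r, by simpa using hr⟩

lemma stmt11_stab (δ : 𝓞 K) (hδ : differentIdeal ℤ (𝓞 K) = Ideal.span {δ})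
    (hδ0 : (δ : K) ≠ 0) (τ : K ≃ₐ[ℚ] K) {x : K} (hx : ∃ m : 𝓞 K, (m : K) = x * (δ : K)) :
    ∃ m : 𝓞 K, (m : K) = τ x * (δ : K) := by
  rw [stmt11_dual_mem δ hδ hδ0] at hx ⊢
  intro w
  obtain ⟨r, hr⟩ := hx (RingOfIntegers.mapRingHom τ.symm w)
  refine ⟨r, ?_⟩
  rw [hr]
  have hco : ((RingOfIntegers.mapRingHom τ.symm w : 𝓞 K) : K) = τ.symm (w : K) := rfl
  rw [hco]
  calc Algebra.trace ℚ K (x * τ.symm (w : K))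
      = Algebra.trace ℚ K (τ (x * τ.symm (w : K))) := (Algebra.trace_eq_of_algEquiv τ _).symm
    _ = Algebra.trace ℚ K (τ x * (w : K)) := by rw [map_mul, AlgEquiv.apply_symm_apply]

lemma stmt11_span_inv (δ : 𝓞 K) (hδ : differentIdeal ℤ (𝓞 K) = Ideal.span {δ})
    (hδ0 : (δ : K) ≠ 0) (τ : K ≃ₐ[ℚ] K) :
    Ideal.span {RingOfIntegers.mapRingHom τ δ} = Ideal.span {δ} := by
  have hτδ : ((RingOfIntegers.mapRingHom τ δ : 𝓞 K) : K) = τ (δ : K) := rfl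
  have hτδ0 : τ (δ : K) ≠ 0 := fun h => hδ0 (by simpa using congrArg τ.symm h)
  have h1 : ∃ m : 𝓞 K, (m : K) = (δ : K)⁻¹ * (δ : K) :=
    ⟨1, by rw [inv_mul_cancel₀ hδ0]; simp⟩
  apply le_antisymm
  · rw [Ideal.span_singleton_le_span_singleton]
    obtain ⟨u, hu⟩ := stmt11_stab δ hδ hδ0 τ.symm h1
    refine ⟨RingOfIntegers.mapRingHom τ u, RingOfIntegers.ext ?_⟩
    push_cast [hτδ]
    show τ (δ : K) = (δ : K) * τ (u : K)
    rw [hu, map_mul, AlgEquiv.apply_symm_apply]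
    field_simp
  · rw [Ideal.span_singleton_le_span_singleton]
    obtain ⟨u, hu⟩ := stmt11_stab δ hδ hδ0 τ h1
    refine ⟨u, RingOfIntegers.ext ?_⟩
    push_cast [hτδ]
    show (δ : K) = τ (δ : K) * (u : K)
    rw [hu, map_inv₀]
    field_simp

lemma stmt11_diff_ne_bot : differentIdeal ℤ (𝓞 K) ≠ ⊥ := by
  intro h
  have h10 : (1 : FractionalIdeal (𝓞 K)⁰ K) ≠ 0 := by
    intro h'
    have h11 := FractionalIdeal.one_mem_one (𝓞 K)⁰ (P := K)
    rw [h', FractionalIdeal.mem_zero_iff] at h11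
    exact one_ne_zero h11
  have h1 := coeIdeal_differentIdeal ℤ ℚ K (𝓞 K)
  rw [h, FractionalIdeal.coeIdeal_bot] at h1
  exact inv_ne_zero (FractionalIdeal.dual_ne_zero ℤ ℚ h10) h1.symm

lemma stmt11_finite (δ : 𝓞 K) (hδ0 : (δ : K) ≠ 0)
    (htotallyreal : ∀ φ : K →+* ℂ, ∀ x : K, (φ x).im = 0) (n : ℕ) :
    ({ν : K | (∀ φ : K →+* ℝ, 0 < φ ν) ∧ (∃ m : 𝓞 K, (m : K) = ν * (δ : K)) ∧
        Algebra.trace ℚ K ν = (n : ℚ)}).Finite := by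
  have hemb := NumberField.Embeddings.finite_of_norm_le K ℂ
    ((n : ℝ) * ∑ φ : K →+* ℂ, ‖φ (δ : K)‖)
  apply Set.Finite.of_finite_image (f := fun ν : K => ν * (δ : K))
  · apply hemb.subset
    rintro - ⟨ν, ⟨hpos, ⟨m, hm⟩, htr⟩, rfl⟩
    constructor
    · show IsIntegral ℤ (ν * (δ : K))
      rw [← hm, RingOfIntegers.coe_eq_algebraMap]
      exact m.isIntegral_coe
    · intro φ
      show ‖φ (ν * (δ : K))‖ ≤ _
      rw [map_mul, norm_mul]
      have hb : ∀ τ : K →ₐ[ℚ] ℂ, 0 < (τ ν).re := fun τ =>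
        hpos (stmt11RealEmb τ.toRingHom (htotallyreal _))
      have htr2 : ((n : ℝ)) = ∑ τ : K →ₐ[ℚ] ℂ, (τ ν).re := by
        have h3 := trace_eq_sum_embeddings (E := ℂ) (K := ℚ) (L := K) (x := ν)
        rw [htr] at h3
        have h4 := congrArg Complex.re h3
        simpa [Complex.re_sum] using h4
      have hφν : ‖φ ν‖ ≤ (n : ℝ) := by
        have h5 : ‖φ ν‖ = (φ ν).re := by
          have h6 : φ ν = (((φ ν).re : ℝ) : ℂ) :=
            Complex.ext rfl (by simp [htotallyreal φ ν])
          nth_rewrite 1 [h6]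
          rw [Complex.norm_real, Real.norm_eq_abs]
          exact abs_of_pos (hpos (stmt11RealEmb φ (htotallyreal _)))
        have hτ0 : (RingHom.equivRatAlgHom K ℂ φ) ν = φ ν := rfl
        calc ‖φ ν‖ = ((RingHom.equivRatAlgHom K ℂ φ) ν).re := by rw [hτ0, h5]
          _ ≤ ∑ τ : K →ₐ[ℚ] ℂ, (τ ν).re :=
            Finset.single_le_sum (fun τ _ => (hb τ).le) (Finset.mem_univ _)
          _ = (n : ℝ) := htr2.symm
      have hφδ : ‖φ (δ : K)‖ ≤ ∑ φ' : K →+* ℂ, ‖φ' (δ : K)‖ :=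
        Finset.single_le_sum (f := fun φ' : K →+* ℂ => ‖φ' (δ : K)‖)
          (fun _ _ => norm_nonneg _) (Finset.mem_univ φ)
      exact mul_le_mul hφν hφδ (norm_nonneg _) n.cast_nonneg
  · intro a _ b _ h
    exact mul_right_cancel₀ hδ0 h

end Aux

theorem stmt11 (K : Type*) [Field K] [NumberField K]
    (hdeg : Module.finrank ℚ K = 2)
    (htotallyreal : ∀ φ : K →+* ℂ, ∀ x : K, (φ x).im = 0)
    (σ : K ≃ₐ[ℚ] K) (hσ : σ ≠ AlgEquiv.refl)
    (δ : 𝓞 K) (hδ : differentIdeal ℤ (𝓞 K) = Ideal.span {δ})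
    (p : ℕ) (hp : p.Prime) (hpinert : (Ideal.span {(p : 𝓞 K)}).IsPrime)
    (ψ : Ideal (𝓞 K) → ℂ)
    (hψmul : ∀ I J : Ideal (𝓞 K), I ≠ ⊥ → J ≠ ⊥ → ψ (I * J) = ψ I * ψ J)
    (hψconj : ∀ I : Ideal (𝓞 K), I ≠ ⊥ →
      ψ I * ψ (Ideal.map (RingOfIntegers.mapRingHom σ) I) = 1)
    (hψprin : ∀ x : 𝓞 K, (∀ φ : K →+* ℝ, 0 < φ (x : K)) → ψ (Ideal.span {x}) = 1)
    (hψdiff : ψ (differentIdeal ℤ (𝓞 K)) = -1)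
    (n : ℕ) (hn : 1 ≤ n) :
    ({ν : K | (∀ φ : K →+* ℝ, 0 < φ ν) ∧ (∃ m : 𝓞 K, (m : K) = ν * (δ : K)) ∧
        Algebra.trace ℚ K ν = (n : ℚ)}).Finite ∧
    (∑ᶠ ν ∈ {ν : K | (∀ φ : K →+* ℝ, 0 < φ ν) ∧ (∃ m : 𝓞 K, (m : K) = ν * (δ : K)) ∧
        Algebra.trace ℚ K ν = (n : ℚ)},
      ∑ᶠ I ∈ {I : Ideal (𝓞 K) | I ≠ ⊥ ∧
          (∃ m : 𝓞 K, (m : K) = ν * (δ : K) ∧ I ∣ Ideal.span {m}) ∧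
          ¬(Ideal.span {(p : 𝓞 K)} ∣ I)}, ψ I) = 0 := by
  classical
  have hδ0K : (δ : K) ≠ 0 := by
    intro h
    have hδz : δ = 0 := RingOfIntegers.ext (by simpa using h)
    exact stmt11_diff_ne_bot (K := K) (by rw [hδ, hδz]; simp)
  have hδ0 : δ ≠ 0 := fun h => hδ0K (by rw [h]; simp)
  have hSfin := stmt11_finite δ hδ0K htotallyreal n
  refine ⟨hSfin, ?_⟩
  set S : Set K := {ν : K | (∀ φ : K →+* ℝ, 0 < φ ν) ∧ (∃ m : 𝓞 K, (m : K) = ν * (δ : K)) ∧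
      Algebra.trace ℚ K ν = (n : ℚ)} with hSdef
  let Dv : K → Set (Ideal (𝓞 K)) := fun ν => {I : Ideal (𝓞 K) | I ≠ ⊥ ∧
      (∃ m : 𝓞 K, (m : K) = ν * (δ : K) ∧ I ∣ Ideal.span {m}) ∧
      ¬(Ideal.span {(p : 𝓞 K)} ∣ I)}
  show (∑ᶠ ν ∈ S, ∑ᶠ I ∈ Dv ν, ψ I) = 0
  set P : Ideal (𝓞 K) := Ideal.span {(p : 𝓞 K)} with hPdef
  -- basic facts about P
  have hp0 : (p : 𝓞 K) ≠ 0 := by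
    intro h
    have : ((p : 𝓞 K) : K) = 0 := by rw [h]; simp
    rw [show ((p : 𝓞 K) : K) = (p : K) by push_cast; rfl] at this
    exact_mod_cast hp.pos.ne' (by exact_mod_cast this)
  have hPne : P ≠ ⊥ := by rw [hPdef, Ne, Ideal.span_singleton_eq_bot]; exact hp0
  have hPprime : Prime P := Ideal.prime_of_isPrime hPne hpinert
  have hψP : ψ P = 1 := by
    refine hψprin (p : 𝓞 K) (fun φ => ?_)
    rw [show ((p : 𝓞 K) : K) = (p : K) by push_cast; rfl, map_natCast]
    exact_mod_cast hp.pos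
  -- the ring hom induced by σ and its inverse
  set σR : 𝓞 K →+* 𝓞 K := RingOfIntegers.mapRingHom σ with hσRdef
  set σR' : 𝓞 K →+* 𝓞 K := RingOfIntegers.mapRingHom σ.symm with hσR'def
  have hcomp : σR'.comp σR = RingHom.id (𝓞 K) :=
    RingHom.ext fun a => RingOfIntegers.ext (σ.symm_apply_apply (a : K))
  have hcomp' : σR.comp σR' = RingHom.id (𝓞 K) :=
    RingHom.ext fun a => RingOfIntegers.ext (σ.apply_symm_apply (a : K))
  have hmapinv : ∀ I : Ideal (𝓞 K), Ideal.map σR' (Ideal.map σR I) = I := by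
    intro I; rw [Ideal.map_map, hcomp, Ideal.map_id]
  have hmapinv' : ∀ I : Ideal (𝓞 K), Ideal.map σR (Ideal.map σR' I) = I := by
    intro I; rw [Ideal.map_map, hcomp', Ideal.map_id]
  have hmapP : Ideal.map σR P = P := by
    rw [hPdef, Ideal.map_span, Set.image_singleton, map_natCast]
  have hmapP' : Ideal.map σR' P = P := by
    rw [hPdef, Ideal.map_span, Set.image_singleton, map_natCast]
  have hmapdvd : ∀ I J : Ideal (𝓞 K), I ∣ J → Ideal.map σR I ∣ Ideal.map σR J := by
    rintro I J ⟨c, rfl⟩; exact ⟨Ideal.map σR c, Ideal.map_mul σR I c⟩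
  have hmapdvd' : ∀ I J : Ideal (𝓞 K), I ∣ J → Ideal.map σR' I ∣ Ideal.map σR' J := by
    rintro I J ⟨c, rfl⟩; exact ⟨Ideal.map σR' c, Ideal.map_mul σR' I c⟩
  -- generic description of the divisor sets
  have hDgen : ∀ (μ : K) (mμ : 𝓞 K) (j : ℕ) (Nμ : Ideal (𝓞 K)), (mμ : K) = μ * (δ : K) →
      Ideal.span {mμ} = P ^ j * Nμ → Nμ ≠ ⊥ → ¬ P ∣ Nμ → Dv μ = {I | I ∣ Nμ} := by
    intro μ mμ j Nμ hmμ hdec hNne hNnd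
    ext I
    simp only [Dv, Set.mem_setOf_eq]
    constructor
    · rintro ⟨hIne, ⟨m', hm', hdvd⟩, hnp⟩
      have hm'e : m' = mμ := RingOfIntegers.ext (by rw [hm', hmμ])
      rw [hm'e, hdec] at hdvd
      refine UniqueFactorizationMonoid.dvd_of_dvd_mul_right_of_no_prime_factors
        (by rwa [Ne, Ideal.zero_eq_bot]) ?_ hdvd
      intro d hdI hdP hdprime
      have hdvdP : d ∣ P := hdprime.dvd_of_dvd_pow hdP
      have hassoc := hdprime.irreducible.associated_of_dvd hPprime.irreducible hdvdP
      exact hnp (hassoc.symm.dvd.trans hdI)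
    · intro hIdvd
      have hIne : I ≠ ⊥ := by
        rintro rfl
        rw [← Ideal.zero_eq_bot] at hIdvd
        exact hNne (by rw [← Ideal.zero_eq_bot]; exact zero_dvd_iff.mp hIdvd)
      refine ⟨hIne, ⟨mμ, hmμ, ?_⟩, fun h => hNnd (h.trans hIdvd)⟩
      rw [hdec]; exact hIdvd.mul_left _
  -- divisor sets are finite
  have hdivfin : ∀ N : Ideal (𝓞 K), N ≠ ⊥ → ({I : Ideal (𝓞 K) | I ∣ N}).Finite := by
    intro N hN
    haveI := UniqueFactorizationMonoid.fintypeSubtypeDvd N (by rwa [Ne, Ideal.zero_eq_bot])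
    have : {I : Ideal (𝓞 K) | I ∣ N} =
        Set.range (fun x : {x : Ideal (𝓞 K) // x ∣ N} => (x : Ideal (𝓞 K))) := by
      ext J; simp [Set.mem_range, Subtype.exists]
    rw [this]
    exact Set.finite_range _
  -- ψ kills powers of P
  have hψpow : ∀ (j : ℕ) (I : Ideal (𝓞 K)), I ≠ ⊥ → ψ (P ^ j * I) = ψ I := by
    intro j
    induction j with
    | zero => intro I hI; rw [pow_zero, one_mul]
    | succ j ih =>
      intro I hI
      have hPI : P * I ≠ ⊥ := by
        rw [Ne, ← Ideal.zero_eq_bot]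
        exact mul_ne_zero (by rwa [Ne, Ideal.zero_eq_bot]) (by rwa [Ne, Ideal.zero_eq_bot])
      rw [pow_succ, mul_assoc, ih (P * I) hPI, hψmul P I hPne hI, hψP, one_mul]
  -- membership stability under σ and σ.symm
  have hmem : ∀ ν ∈ S, σ ν ∈ S := by
    rintro ν ⟨h1, h2, h3⟩
    refine ⟨fun φ => h1 (φ.comp σ.toAlgHom.toRingHom), stmt11_stab δ hδ hδ0K σ h2, ?_⟩
    rw [Algebra.trace_eq_of_algEquiv σ ν, h3]
  have hmem' : ∀ ν ∈ S, σ.symm ν ∈ S := by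
    rintro ν ⟨h1, h2, h3⟩
    refine ⟨fun φ => h1 (φ.comp σ.symm.toAlgHom.toRingHom),
      stmt11_stab δ hδ hδ0K σ.symm h2, ?_⟩
    rw [Algebra.trace_eq_of_algEquiv σ.symm ν, h3]
  have hbij : Set.BijOn σ S S :=
    ⟨hmem, σ.injective.injOn, fun ν hν => ⟨σ.symm ν, hmem' ν hν, σ.apply_symm_apply ν⟩⟩
  -- the key cancellation
  have hkey : ∀ ν ∈ S, (∑ᶠ I ∈ Dv ν, ψ I) + (∑ᶠ I ∈ Dv (σ ν), ψ I) = 0 := by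
    rintro ν ⟨hpos, ⟨m, hm⟩, htr⟩
    have hν0 : ν ≠ 0 := by
      intro h
      rw [h, map_zero] at htr
      have : n = 0 := by exact_mod_cast htr.symm
      omega
    have hm0 : m ≠ 0 := by
      intro h
      apply hν0
      have : (0 : K) = ν * (δ : K) := by rw [← hm, h]; simp
      rcases mul_eq_zero.mp this.symm with h' | h'
      · exact h'
      · exact absurd h' hδ0K
    have hMne : Ideal.span {m} ≠ ⊥ := by rw [Ne, Ideal.span_singleton_eq_bot]; exact hm0
    obtain ⟨M₀, hM₀eq, hM₀nd⟩ :=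
      (FiniteMultiplicity.of_prime_left hPprime hMne).exists_eq_pow_mul_and_not_dvd
    set k := multiplicity P (Ideal.span {m}) with hkdef
    have hM₀ne : M₀ ≠ ⊥ := by
      rintro rfl
      exact hMne (by rw [hM₀eq, Ideal.mul_bot])
    have hδspanne : Ideal.span {δ} ≠ ⊥ := by rw [Ne, Ideal.span_singleton_eq_bot]; exact hδ0
    -- ψ of span m
    have hψspanm : ψ (Ideal.span {m}) = -1 := by
      have h2 : ψ (Ideal.span {m * δ}) = 1 := by
        refine hψprin _ (fun φ => ?_)
        have hco : ((m * δ : 𝓞 K) : K) = ν * ((δ : K) * (δ : K)) := by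
          show ((m : K) * (δ : K)) = _
          rw [hm]; ring
        rw [hco, map_mul, map_mul]
        have hδφ : φ (δ : K) ≠ 0 := fun h => hδ0K (by
          have := map_eq_zero (f := φ) |>.mp h; exact this)
        exact mul_pos (hpos φ) (mul_self_pos.mpr hδφ)
      have h3 := hψmul (Ideal.span {m}) (Ideal.span {δ}) hMne hδspanne
      rw [Ideal.span_singleton_mul_span_singleton, h2, ← hδ, hψdiff] at h3
      linear_combination h3
    have hψM₀ : ψ M₀ = -1 := by
      have h4 := hψpow k M₀ hM₀ne
      rw [← hM₀eq, hψspanm] at h4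
      exact h4.symm
    -- σ side data
    obtain ⟨m', hm'⟩ := stmt11_stab δ hδ hδ0K σ ⟨m, hm⟩
    have hspanm' : Ideal.span {m'} = Ideal.map σR (Ideal.span {m}) := by
      rw [Ideal.map_span, Set.image_singleton]
      have helem : m' * σR δ = σR m * δ := RingOfIntegers.ext (by
        show (m' : K) * σ (δ : K) = σ (m : K) * (δ : K)
        rw [hm', hm, map_mul]
        ring)
      have e1 : Ideal.span {m'} * Ideal.span {σR δ} = Ideal.span {σR m} * Ideal.span {δ} := by
        rw [Ideal.span_singleton_mul_span_singleton, Ideal.span_singleton_mul_span_singleton,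
          helem]
      rw [show Ideal.span {σR δ} = Ideal.span {δ} from stmt11_span_inv δ hδ hδ0K σ] at e1
      have := mul_right_cancel₀ (b := Ideal.span {δ})
        (by rwa [Ne, Ideal.zero_eq_bot]) e1
      exact this
    have hdecσ : Ideal.span {m'} = P ^ k * Ideal.map σR M₀ := by
      rw [hspanm', hM₀eq, Ideal.map_mul, Ideal.map_pow, hmapP]
    have hM₀σne : Ideal.map σR M₀ ≠ ⊥ := by
      intro h
      exact hM₀ne (by rw [← hmapinv M₀, h, Ideal.map_bot])
    have hndσ : ¬ P ∣ Ideal.map σR M₀ := by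
      intro hdvd
      apply hM₀nd
      have := hmapdvd' P _ hdvd
      rwa [hmapP', hmapinv] at this
    -- divisor set descriptions
    have hDν : Dv ν = {I | I ∣ M₀} := hDgen ν m k M₀ hm hM₀eq hM₀ne hM₀nd
    have hDσν : Dv (σ ν) = {I | I ∣ Ideal.map σR M₀} :=
      hDgen (σ ν) m' k _ hm' hdecσ hM₀σne hndσ
    have himg : {I : Ideal (𝓞 K) | I ∣ Ideal.map σR M₀} =
        (Ideal.map σR) '' {I | I ∣ M₀} := by
      ext J
      simp only [Set.mem_image, Set.mem_setOf_eq]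
      constructor
      · intro hJ
        refine ⟨Ideal.map σR' J, ?_, hmapinv' J⟩
        have := hmapdvd' J _ hJ
        rwa [hmapinv] at this
      · rintro ⟨I, hI, rfl⟩
        exact hmapdvd I M₀ hI
    have hfinM₀ := hdivfin M₀ hM₀ne
    have hne0 : ∀ I : Ideal (𝓞 K), I ∣ M₀ → I ≠ ⊥ := by
      intro I hI
      rintro rfl
      rw [← Ideal.zero_eq_bot] at hI
      exact hM₀ne (by rw [← Ideal.zero_eq_bot]; exact zero_dvd_iff.mp hI)
    -- complement function
    obtain ⟨c, hc⟩ : ∃ c : Ideal (𝓞 K) → Ideal (𝓞 K), ∀ I, I ∣ M₀ → M₀ = I * c I := by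
      refine ⟨fun I => if h : I ∣ M₀ then h.choose else ⊥, fun I h => ?_⟩
      simp only [dif_pos h]
      exact h.choose_spec
    have hcdvd : ∀ I, I ∣ M₀ → c I ∣ M₀ := fun I h => ⟨I, by rw [hc I h]; ring⟩
    have hM₀0 : M₀ ≠ 0 := by rwa [Ne, Ideal.zero_eq_bot]
    have hcc : ∀ I, I ∣ M₀ → c (c I) = I := by
      intro I h
      have h1 := hc _ (hcdvd I h)
      have h2 := hc I h
      have hcne : c I ≠ 0 := by
        intro h0
        rw [h0, mul_zero] at h2
        exact hM₀0 h2
      apply mul_left_cancel₀ hcne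
      rw [← h1, h2]; ring
    have hψc : ∀ I, I ∣ M₀ → ψ I ≠ 0 ∧ ψ (c I) = -(ψ I)⁻¹ := by
      intro I h
      have h1 := hψmul I (c I) (hne0 I h) (hne0 _ (hcdvd I h))
      rw [← hc I h, hψM₀] at h1
      have hI0 : ψ I ≠ 0 := by
        intro h0
        rw [h0, zero_mul] at h1
        norm_num at h1
      refine ⟨hI0, ?_⟩
      field_simp
      linear_combination -h1
    -- first sum
    have hsum1 : (∑ᶠ I ∈ Dv ν, ψ I) = - ∑ I ∈ hfinM₀.toFinset, (ψ I)⁻¹ := by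
      rw [hDν, finsum_mem_eq_finite_toFinset_sum _ hfinM₀]
      rw [← Finset.sum_neg_distrib]
      refine Finset.sum_nbij' c c ?_ ?_ ?_ ?_ ?_
      · intro I hI
        rw [Set.Finite.mem_toFinset] at hI ⊢
        exact hcdvd I hI
      · intro I hI
        rw [Set.Finite.mem_toFinset] at hI ⊢
        exact hcdvd I hI
      · intro I hI
        rw [Set.Finite.mem_toFinset] at hI
        exact hcc I hI
      · intro I hI
        rw [Set.Finite.mem_toFinset] at hI
        exact hcc I hI
      · intro I hI
        rw [Set.Finite.mem_toFinset] at hI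
        have h5 := (hψc (c I) (hcdvd I hI)).2
        rw [hcc I hI] at h5
        exact h5
    -- second sum
    have hinjOn : Set.InjOn (Ideal.map σR) {I : Ideal (𝓞 K) | I ∣ M₀} := by
      intro a _ b _ hab
      have := congrArg (Ideal.map σR') hab
      rwa [hmapinv, hmapinv] at this
    have hsum2 : (∑ᶠ I ∈ Dv (σ ν), ψ I) = ∑ I ∈ hfinM₀.toFinset, (ψ I)⁻¹ := by
      rw [hDσν, himg, finsum_mem_image hinjOn, finsum_mem_eq_finite_toFinset_sum _ hfinM₀]
      refine Finset.sum_congr rfl ?_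
      intro I hI
      rw [Set.Finite.mem_toFinset] at hI
      have h1 := hψconj I (hne0 I hI)
      have hI0 := (hψc I hI).1
      apply mul_left_cancel₀ hI0
      rw [h1, mul_inv_cancel₀ hI0]
    rw [hsum1, hsum2]
    ring
  -- assembling
  have hre : (∑ᶠ ν ∈ S, ∑ᶠ I ∈ Dv (σ ν), ψ I) = ∑ᶠ ν ∈ S, ∑ᶠ I ∈ Dv ν, ψ I :=
    finsum_mem_eq_of_bijOn σ hbij (fun x _ => rfl)
  have hz : (∑ᶠ ν ∈ S, ((∑ᶠ I ∈ Dv ν, ψ I) + ∑ᶠ I ∈ Dv (σ ν), ψ I)) = 0 := by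
    rw [finsum_mem_congr rfl hkey]
    simp
  rw [finsum_mem_add_distrib hSfin, hre] at hz
  exact add_self_eq_zero.mp hz
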